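/- Pure-to-ensemble transformations under the Z₂-SSR: Let (p₀,p₁) be a standard-form weight pair of a Z₂-noninvariant pure state. Let μ range over a finite index set, let w_μ ≥ 0 with ∑_μ w_μ = 1, and let (q₀_μ, q₁_μ) be weight pairs with q₀_μ, q₁_μ ≥ 0 and q₀_μ + q₁_μ = 1. If ∑_μ w_μ · min(q₀_μ, q₁_μ) ≤ min(p₀, p₁), then the ensemble transformation is achievable by a trace-preserving Z₂-invariant operation: there exist, for each μ and each β ∈ Bool, a bit B_{μ,β} ∈ {0,1}, nonnegative coefficients c₀_{μ,β}, c₁_{μ,β}, and v_{μ,β} ≥ 0, such that ∑_{μ,β} (c₀_{μ,β})² = 1, ∑_{μ,β} (c₁_{μ,β})² = 1, v_{μ,false} + v_{μ,true} = w_μ for every μ, and for each (μ,β): if B_{μ,β} = 0 then (c₀_{μ,β})²·p₀ = v_{μ,β}·q₀_μ and (c₁_{μ,β})²·p₁ = v_{μ,β}·q₁_μ, while if B_{μ,β} = 1 then (c₀_{μ,β})²·p₀ = v_{μ,β}·q₁_μ and (c₁_{μ,β})²·p₁ = v_{μ,β}·q₀_μ. -/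

import Mathlib

/-- **Pure-to-ensemble transformations under the Z₂-SSR.**
If the average of the frameness measure over the target ensemble does not exceed
that of the source state, i.e. `∑ μ, w μ * min (q₀ μ) (q₁ μ) ≤ min p₀ p₁`, then the
ensemble transformation is achievable by a trace-preserving Z₂-invariant operation,
with two Kraus operators (indexed by `β : Bool`) assigned to each outcome `μ`. -/
theorem z2_pure_to_ensemble
    (p₀ p₁ : ℝ) (hp₀ : 0 < p₀) (hp₁ : 0 < p₁) (hp : p₀ + p₁ = 1)
    (n : ℕ) (w : Fin n → ℝ) (hw : ∀ μ, 0 ≤ w μ) (hwsum : ∑ μ, w μ = 1)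
    (q₀ q₁ : Fin n → ℝ) (hq₀ : ∀ μ, 0 ≤ q₀ μ) (hq₁ : ∀ μ, 0 ≤ q₁ μ)
    (hq : ∀ μ, q₀ μ + q₁ μ = 1)
    (hC : ∑ μ, w μ * min (q₀ μ) (q₁ μ) ≤ min p₀ p₁) :
    ∃ (B : Fin n → Bool → Bool) (c₀ c₁ v : Fin n → Bool → ℝ),
      (∀ μ β, 0 ≤ c₀ μ β) ∧ (∀ μ β, 0 ≤ c₁ μ β) ∧ (∀ μ β, 0 ≤ v μ β) ∧
      (∑ μ, ∑ β, (c₀ μ β) ^ 2 = 1) ∧ (∑ μ, ∑ β, (c₁ μ β) ^ 2 = 1) ∧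
      (∀ μ, v μ false + v μ true = w μ) ∧
      (∀ μ β, if B μ β then
          (c₀ μ β) ^ 2 * p₀ = v μ β * q₁ μ ∧ (c₁ μ β) ^ 2 * p₁ = v μ β * q₀ μ
        else
          (c₀ μ β) ^ 2 * p₀ = v μ β * q₀ μ ∧ (c₁ μ β) ^ 2 * p₁ = v μ β * q₁ μ) := by
  set M : ℝ := ∑ μ, w μ * min (q₀ μ) (q₁ μ) with hMdef
  have hMp₀ : M ≤ p₀ := hC.trans (min_le_left _ _)
  have hMp₁ : M ≤ p₁ := hC.trans (min_le_right _ _)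
  have h2M : 0 ≤ 1 - 2 * M := by linarith
  set lam : ℝ := (p₁ - M) / (1 - 2 * M) with hlamdef
  have hlam0 : 0 ≤ lam := div_nonneg (by linarith) h2M
  have hlam1 : lam ≤ 1 := by
    rcases eq_or_lt_of_le h2M with h | h
    · have hM : M = 1 / 2 := by linarith
      have : p₁ = 1 / 2 := by linarith
      simp [hlamdef, hM, this]
    · rw [div_le_one h]; linarith
  set s : Fin n → ℝ := fun μ => if q₀ μ ≤ q₁ μ then w μ else 0 with hsdef
  set t : Fin n → ℝ := fun μ => lam * s μ + (1 - lam) * (w μ - s μ) with htdef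
  have hs0 : ∀ μ, 0 ≤ s μ := fun μ => by
    simp only [hsdef]; split <;> simp [hw μ]
  have hsw : ∀ μ, s μ ≤ w μ := fun μ => by
    simp only [hsdef]; split <;> simp [hw μ]
  have ht0 : ∀ μ, 0 ≤ t μ := fun μ => by
    have h1 := hs0 μ; have h2 := hsw μ
    simp only [htdef]
    have h3 : 0 ≤ (1 - lam) * (w μ - s μ) := mul_nonneg (by linarith) (by linarith)
    nlinarith [mul_nonneg hlam0 (hs0 μ)]
  have htw : ∀ μ, t μ ≤ w μ := fun μ => by
    have h1 := hs0 μ; have h2 := hsw μ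
    simp only [htdef]
    nlinarith
  have hterm : ∀ μ, t μ * q₀ μ + (w μ - t μ) * q₁ μ
      = lam * (w μ * min (q₀ μ) (q₁ μ)) + (1 - lam) * (w μ - w μ * min (q₀ μ) (q₁ μ)) := by
    intro μ
    rcases le_or_gt (q₀ μ) (q₁ μ) with h | h
    · have hmin : min (q₀ μ) (q₁ μ) = q₀ μ := min_eq_left h
      have hs : s μ = w μ := by simp [hsdef, h]
      simp only [htdef, hs, hmin]
      linear_combination ((1 - lam) * w μ) * hq μ
    · have hmin : min (q₀ μ) (q₁ μ) = q₁ μ := min_eq_right h.le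
      have hs : s μ = 0 := by simp [hsdef, not_le.mpr h]
      simp only [htdef, hs, hmin]
      linear_combination ((1 - lam) * w μ) * hq μ
  have key : ∑ μ, (t μ * q₀ μ + (w μ - t μ) * q₁ μ) = p₀ := by
    have hsum : ∑ μ, (t μ * q₀ μ + (w μ - t μ) * q₁ μ)
        = lam * M + (1 - lam) * (1 - M) := by
      rw [Finset.sum_congr rfl (fun μ _ => hterm μ)]
      rw [Finset.sum_add_distrib, ← Finset.mul_sum, ← Finset.mul_sum,
        Finset.sum_sub_distrib, hwsum, ← hMdef]
    rw [hsum]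
    rcases eq_or_lt_of_le h2M with h | h
    · have hM : M = 1 / 2 := by linarith
      have hp₁' : p₁ = 1 / 2 := by linarith
      have hp₀' : p₀ = 1 / 2 := by linarith
      simp [hlamdef, hM, hp₁', hp₀']; norm_num
    · have hne : (1 - 2 * M) ≠ 0 := ne_of_gt h
      rw [hlamdef]
      have hne2 : (1 - M * 2) ≠ 0 := by linarith
      field_simp
      nlinarith [hp]
  have key' : ∑ μ, (t μ * q₁ μ + (w μ - t μ) * q₀ μ) = p₁ := by
    have h1 : ∀ μ, t μ * q₁ μ + (w μ - t μ) * q₀ μ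
        = w μ - (t μ * q₀ μ + (w μ - t μ) * q₁ μ) := by
      intro μ; linear_combination w μ * hq μ
    rw [Finset.sum_congr rfl (fun μ _ => h1 μ), Finset.sum_sub_distrib, hwsum, key]
    linarith
  have hnn0 : ∀ μ (β : Bool), 0 ≤ (cond β ((w μ - t μ) * q₁ μ) (t μ * q₀ μ)) / p₀ := by
    intro μ β
    cases β <;>
      exact div_nonneg (by
        first
        | exact mul_nonneg (ht0 μ) (hq₀ μ)
        | exact mul_nonneg (sub_nonneg.mpr (htw μ)) (hq₁ μ)) hp₀.le
  have hnn1 : ∀ μ (β : Bool), 0 ≤ (cond β ((w μ - t μ) * q₀ μ) (t μ * q₁ μ)) / p₁ := by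
    intro μ β
    cases β <;>
      exact div_nonneg (by
        first
        | exact mul_nonneg (ht0 μ) (hq₁ μ)
        | exact mul_nonneg (sub_nonneg.mpr (htw μ)) (hq₀ μ)) hp₁.le
  refine ⟨fun μ β => β,
    fun μ β => Real.sqrt ((cond β ((w μ - t μ) * q₁ μ) (t μ * q₀ μ)) / p₀),
    fun μ β => Real.sqrt ((cond β ((w μ - t μ) * q₀ μ) (t μ * q₁ μ)) / p₁),
    fun μ β => cond β (w μ - t μ) (t μ),
    fun μ β => Real.sqrt_nonneg _, fun μ β => Real.sqrt_nonneg _,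
    fun μ β => by cases β <;> simp [ht0 μ, sub_nonneg.mpr (htw μ)],
    ?_, ?_, fun μ => by simp, ?_⟩
  · have hsq : ∀ μ (β : Bool),
        (Real.sqrt ((cond β ((w μ - t μ) * q₁ μ) (t μ * q₀ μ)) / p₀)) ^ 2
        = (cond β ((w μ - t μ) * q₁ μ) (t μ * q₀ μ)) / p₀ :=
      fun μ β => Real.sq_sqrt (hnn0 μ β)
    simp only [hsq, Fintype.sum_bool, cond_true, cond_false]
    rw [show (∑ μ, ((w μ - t μ) * q₁ μ / p₀ + t μ * q₀ μ / p₀))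
        = (∑ μ, (t μ * q₀ μ + (w μ - t μ) * q₁ μ)) / p₀ by
      rw [Finset.sum_div]; exact Finset.sum_congr rfl fun μ _ => by ring]
    rw [key, div_self hp₀.ne']
  · have hsq : ∀ μ (β : Bool),
        (Real.sqrt ((cond β ((w μ - t μ) * q₀ μ) (t μ * q₁ μ)) / p₁)) ^ 2
        = (cond β ((w μ - t μ) * q₀ μ) (t μ * q₁ μ)) / p₁ :=
      fun μ β => Real.sq_sqrt (hnn1 μ β)
    simp only [hsq, Fintype.sum_bool, cond_true, cond_false]
    rw [show (∑ μ, ((w μ - t μ) * q₀ μ / p₁ + t μ * q₁ μ / p₁))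
        = (∑ μ, (t μ * q₁ μ + (w μ - t μ) * q₀ μ)) / p₁ by
      rw [Finset.sum_div]; exact Finset.sum_congr rfl fun μ _ => by ring]
    rw [key', div_self hp₁.ne']
  · intro μ β
    have e0 := Real.sq_sqrt (hnn0 μ β)
    have e1 := Real.sq_sqrt (hnn1 μ β)
    cases β
    · simp only [cond_false] at e0 e1 ⊢
      rw [if_neg (by simp)]
      exact ⟨by rw [e0, div_mul_cancel₀ _ hp₀.ne'],
             by rw [e1, div_mul_cancel₀ _ hp₁.ne']⟩
    · simp only [cond_true] at e0 e1 ⊢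
      rw [if_pos trivial]
      exact ⟨by rw [e0, div_mul_cancel₀ _ hp₀.ne'],
             by rw [e1, div_mul_cancel₀ _ hp₁.ne']⟩
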